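/- (Outer radius of the quasi-steady Keplerian disk, Eq. (55).) Let G M (1−Γ) > 0, R > 0, α > 0, x_int > 0 and x_end > 0 be real numbers. Set ω = α √(GM(1−Γ)/R³). Suppose disk material at radius r_int = x_int R with rotational speed ω r_int moves outward conserving specific angular momentum into a circular Keplerian orbit at radius r_end = x_end R, i.e. ω r_int² = √(GM(1−Γ)/r_end) · r_end. Then x_end = α² x_int⁴. In particular, if x_int = 2^{1/3} α^{−2/3} (the escape radius), then x_end = 2^{4/3} α^{−2/3}; hence the maximal quasi-steady Keplerian disk region extends from α^{−2/3} R to 2^{4/3} α^{−2/3} R. -/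

import Mathlib

open Real

/-- Outer radius of the quasi-steady Keplerian disk (Eq. (55)): material at
`r_int = x_int R` rotating rigidly at `ω r_int` moving outward at constant specific
angular momentum into a circular Keplerian orbit at `r_end = x_end R` satisfies
`x_end = α² x_int⁴`; in particular, starting from the escape radius
`x_int = 2^(1/3) α^(−2/3)` gives `x_end = 2^(4/3) α^(−2/3)`. -/
theorem outer_radius_of_keplerian_disk
    (G M Γ R α xint xend : ℝ)
    (hGM : 0 < G * M * (1 - Γ)) (hR : 0 < R) (hα : 0 < α)
    (hxint : 0 < xint) (hxend : 0 < xend)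
    (ω rint rend : ℝ)
    (hω : ω = α * Real.sqrt (G * M * (1 - Γ) / R ^ 3))
    (hrint : rint = xint * R) (hrend : rend = xend * R)
    (hang : ω * rint ^ 2 = Real.sqrt (G * M * (1 - Γ) / rend) * rend) :
    xend = α ^ 2 * xint ^ 4 ∧
      (xint = (2 : ℝ) ^ ((1 : ℝ) / 3) * α ^ (-(2 : ℝ) / 3) →
        xend = (2 : ℝ) ^ ((4 : ℝ) / 3) * α ^ (-(2 : ℝ) / 3)) := by
  set K := G * M * (1 - Γ) with hK
  have hrend' : 0 < rend := hrend ▸ mul_pos hxend hR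
  have hsq1 : (Real.sqrt (K / rend) * rend) ^ 2 = K * rend := by
    rw [mul_pow, Real.sq_sqrt (le_of_lt (div_pos hGM hrend'))]
    field_simp
  have hsq2 : (ω * rint ^ 2) ^ 2 = α ^ 2 * (K / R ^ 3) * rint ^ 4 := by
    rw [hω, mul_pow, mul_pow, Real.sq_sqrt (le_of_lt (div_pos hGM (pow_pos hR 3)))]
    ring
  have heq : α ^ 2 * (K / R ^ 3) * rint ^ 4 = K * rend := by
    rw [← hsq2, hang, hsq1]
  have hmain : xend = α ^ 2 * xint ^ 4 := by
    rw [hrint, hrend] at heq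
    have hR3 : R ^ 3 ≠ 0 := ne_of_gt (pow_pos hR 3)
    have hKne : K ≠ 0 := ne_of_gt hGM
    field_simp at heq
    have h4 : (K * R ^ 4) ≠ 0 := ne_of_gt (mul_pos hGM (pow_pos hR 4))
    apply mul_right_cancel₀ h4
    linear_combination (-(K * R ^ 4)) * heq
  refine ⟨hmain, fun hx => ?_⟩
  rw [hmain, hx, mul_pow, ← Real.rpow_natCast ((2:ℝ) ^ ((1:ℝ)/3)) 4,
      ← Real.rpow_natCast (α ^ (-(2:ℝ)/3)) 4,
      ← Real.rpow_mul (by norm_num : (0:ℝ) ≤ 2),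
      ← Real.rpow_mul (le_of_lt hα)]
  have h1 : α ^ 2 * α ^ ((-(2:ℝ)/3) * ((4:ℕ):ℝ)) = α ^ (-(2:ℝ)/3) := by
    rw [← Real.rpow_natCast α 2, ← Real.rpow_add hα]
    norm_num
  have h2 : ((1:ℝ)/3 * ((4:ℕ):ℝ)) = (4:ℝ)/3 := by norm_num
  rw [h2]
  calc α ^ 2 * ((2:ℝ) ^ ((4:ℝ)/3) * α ^ ((-(2:ℝ)/3) * ((4:ℕ):ℝ)))
      = (2:ℝ) ^ ((4:ℝ)/3) * (α ^ 2 * α ^ ((-(2:ℝ)/3) * ((4:ℕ):ℝ))) := by ring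
    _ = (2:ℝ) ^ ((4:ℝ)/3) * α ^ (-(2:ℝ)/3) := by rw [h1]
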